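/- Consider the Laplace-domain equations of the two-machine power system at a fixed complex frequency s with s ≠ 0 and s² + Ω² ≠ 0: complex numbers δ₁, δ₂, θ satisfy M·s²·δ₁ = −(δ₁ − θ)/X₁ + d₁, M·s²·δ₂ = −(δ₂ − θ)/X₂ + d₂, and u + (δ₁ − θ)/X₁ + (δ₂ − θ)/X₂ = 0, where d₁, d₂, u are given complex inputs. Then, with G₀ = 1/(s²·M·(s² + Ω²)), N₁ = (X₂/XΣ)·(s² + 1/(M·X₂)), N₂ = (X₁/XΣ)·(s² + 1/(M·X₁)), and N₃ = M·XΣ·N₁·N₂, the (unique) solution is δ₁ = G₀·[(s² + Ω²/2)·d₁ + (Ω²/2)·d₂ + N₁·u], δ₂ = G₀·[(Ω²/2)·d₁ + (s² + Ω²/2)·d₂ + N₂·u], and θ = G₀·[N₁·d₁ + N₂·d₂ + N₃·u]. -/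

import Mathlib

/-- Laplace-domain solution of the two-machine power system:
explicit transfer-function representation of `δ₁`, `δ₂`, `θ`.
Here `Xs = XΣ = X₁ + X₂` and `Ω = √(2/(M·XΣ))`. -/
theorem two_machine_laplace_solution
    (M X₁ X₂ Xs Ω : ℝ) (hM : 0 < M) (hX₁ : 0 < X₁) (hX₂ : 0 < X₂)
    (hXs : Xs = X₁ + X₂) (hΩ : Ω = Real.sqrt (2 / (M * Xs)))
    (s : ℂ) (hs : s ≠ 0) (hsΩ : s ^ 2 + (Ω : ℂ) ^ 2 ≠ 0)
    (d₁ d₂ u δ₁ δ₂ θ : ℂ)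
    (G₀ N₁ N₂ N₃ : ℂ)
    (hG₀ : G₀ = 1 / (s ^ 2 * (M : ℂ) * (s ^ 2 + (Ω : ℂ) ^ 2)))
    (hN₁ : N₁ = ((X₂ : ℂ) / (Xs : ℂ)) * (s ^ 2 + 1 / ((M : ℂ) * (X₂ : ℂ))))
    (hN₂ : N₂ = ((X₁ : ℂ) / (Xs : ℂ)) * (s ^ 2 + 1 / ((M : ℂ) * (X₁ : ℂ))))
    (hN₃ : N₃ = (M : ℂ) * (Xs : ℂ) * N₁ * N₂)
    (h1 : (M : ℂ) * s ^ 2 * δ₁ = -((δ₁ - θ) / (X₁ : ℂ)) + d₁)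
    (h2 : (M : ℂ) * s ^ 2 * δ₂ = -((δ₂ - θ) / (X₂ : ℂ)) + d₂)
    (h3 : u + (δ₁ - θ) / (X₁ : ℂ) + (δ₂ - θ) / (X₂ : ℂ) = 0) :
    δ₁ = G₀ * ((s ^ 2 + (Ω : ℂ) ^ 2 / 2) * d₁ + ((Ω : ℂ) ^ 2 / 2) * d₂ + N₁ * u) ∧
    δ₂ = G₀ * (((Ω : ℂ) ^ 2 / 2) * d₁ + (s ^ 2 + (Ω : ℂ) ^ 2 / 2) * d₂ + N₂ * u) ∧
    θ = G₀ * (N₁ * d₁ + N₂ * d₂ + N₃ * u) := by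
  have hMc : (M : ℂ) ≠ 0 := Complex.ofReal_ne_zero.2 hM.ne'
  have hX1c : (X₁ : ℂ) ≠ 0 := Complex.ofReal_ne_zero.2 hX₁.ne'
  have hX2c : (X₂ : ℂ) ≠ 0 := Complex.ofReal_ne_zero.2 hX₂.ne'
  have hXsR : 0 < Xs := by rw [hXs]; positivity
  have hXsc : (Xs : ℂ) ≠ 0 := Complex.ofReal_ne_zero.2 hXsR.ne'
  have hΩ2R : Ω ^ 2 = 2 / (M * Xs) := by
    rw [hΩ, Real.sq_sqrt]; positivity
  have hw2 : (M : ℂ) * (Xs : ℂ) * (Ω : ℂ) ^ 2 = 2 := by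
    have : (M * Xs) * Ω ^ 2 = 2 := by
      rw [hΩ2R]; field_simp
    exact_mod_cast congrArg (Complex.ofReal ·) this

  have hXC : (Xs : ℂ) = (X₁ : ℂ) + (X₂ : ℂ) := by exact_mod_cast congrArg (Complex.ofReal ·) hXs
  have H1 : (M : ℂ) * s ^ 2 * δ₁ * X₁ = -(δ₁ - θ) + d₁ * X₁ := by
    field_simp at h1; linear_combination h1
  have H2 : (M : ℂ) * s ^ 2 * δ₂ * X₂ = -(δ₂ - θ) + d₂ * X₂ := by
    field_simp at h2; linear_combination h2
  have H3 : u * X₁ * X₂ + (δ₁ - θ) * X₂ + (δ₂ - θ) * X₁ = 0 := by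
    field_simp at h3; linear_combination h3
  have keyθ : (M:ℂ)^2 * s^2 * X₁ * X₂ * Xs * (s^2 + (Ω:ℂ)^2) * θ =
      X₁ * X₂ * (((M:ℂ)*s^2*X₂+1) * d₁ + ((M:ℂ)*s^2*X₁+1) * d₂
        + ((M:ℂ)*s^2*X₁+1)*((M:ℂ)*s^2*X₂+1) * u) := by
    linear_combination (((M:ℂ)*s^2*X₂+1)*X₂) * H1 + (((M:ℂ)*s^2*X₁+1)*X₁) * H2
      - (((M:ℂ)*s^2*X₁+1)*((M:ℂ)*s^2*X₂+1)) * H3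
      + ((M:ℂ)*s^2*X₁*X₂*θ) * hw2
      + ((M:ℂ)^2*s^4*X₁*X₂*θ) * hXC

  have keyδ₁ : (M:ℂ)^2 * s^2 * X₁ * X₂ * Xs * (s^2 + (Ω:ℂ)^2) * δ₁ =
      X₁ * X₂ * ((1 + (M:ℂ)*s^2*Xs) * d₁ + d₂ + ((M:ℂ)*s^2*X₂+1) * u) := by
    linear_combination (X₁:ℂ) * H2 - (X₁:ℂ) * H1 - ((M:ℂ)*s^2*X₂+1) * H3
      + (((M:ℂ)*s^2*X₂+1)*(Xs:ℂ)) * H1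
      + ((M:ℂ)*s^2*X₁*X₂*δ₁) * hw2
      + (-(M:ℂ)*s^2*(X₁+X₂)*δ₁ + (M:ℂ)*s^2*X₂*θ + X₁*d₁ - δ₁ + θ) * hXC
  have keyδ₂ : (M:ℂ)^2 * s^2 * X₁ * X₂ * Xs * (s^2 + (Ω:ℂ)^2) * δ₂ =
      X₁ * X₂ * (d₁ + (1 + (M:ℂ)*s^2*Xs) * d₂ + ((M:ℂ)*s^2*X₁+1) * u) := by
    linear_combination (X₂:ℂ) * H1 - (X₂:ℂ) * H2 - ((M:ℂ)*s^2*X₁+1) * H3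
      + (((M:ℂ)*s^2*X₁+1)*(Xs:ℂ)) * H2
      + ((M:ℂ)*s^2*X₁*X₂*δ₂) * hw2
      + (-(M:ℂ)*s^2*(X₁+X₂)*δ₂ + (M:ℂ)*s^2*X₁*θ + X₂*d₂ - δ₂ + θ) * hXC

  have hs2 : s ^ 2 ≠ 0 := pow_ne_zero 2 hs
  have hD : ((M:ℂ)^2 * s^2 * X₁ * X₂ * Xs * (s^2 + (Ω:ℂ)^2)) ≠ 0 := by
    exact mul_ne_zero (mul_ne_zero (mul_ne_zero (mul_ne_zero (mul_ne_zero
      (pow_ne_zero 2 hMc) hs2) hX1c) hX2c) hXsc) hsΩ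
  have hG₀' : (s ^ 2 * (M : ℂ) * (s ^ 2 + (Ω : ℂ) ^ 2)) * G₀ = 1 := by
    rw [hG₀, mul_one_div, div_self (mul_ne_zero (mul_ne_zero hs2 hMc) hsΩ)]
  refine ⟨mul_left_cancel₀ hD ?_, mul_left_cancel₀ hD ?_, mul_left_cancel₀ hD ?_⟩
  · rw [keyδ₁, hN₁]
    field_simp
    linear_combination (-((M:ℂ)*Xs*(d₁*(s^2*2+(Ω:ℂ)^2) + d₂*(Ω:ℂ)^2) + ((X₂:ℂ)*M*s^2+1)*u*2)) * hG₀'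
      + (-(d₁+d₂)) * hw2
  · rw [keyδ₂, hN₂]
    field_simp
    linear_combination (-((M:ℂ)*Xs*(d₁*(Ω:ℂ)^2 + d₂*(s^2*2+(Ω:ℂ)^2)) + ((X₁:ℂ)*M*s^2+1)*u*2)) * hG₀'
      + (-(d₁+d₂)) * hw2
  · rw [keyθ, hN₃, hN₁, hN₂]
    field_simp
    linear_combination (-(((X₂:ℂ)*M*s^2+1)*d₁ + ((X₁:ℂ)*M*s^2+1)*d₂ + ((X₂:ℂ)*M*s^2+1)*((X₁:ℂ)*M*s^2+1)*u)) * hG₀'
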